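/- Let n ≥ 2 be an integer and λ, σ, s ∈ ℂ. For every smooth u : B → ℂ on the open unit ball B ⊂ ℝ^{n−1}, the identity P_σ((1−|Y|²)^s u) = (1−|Y|²)^s · [ 4s(s−σ)·(1−|Y|²)^{−1}·u + P_{σ−2s} u ] holds at every point of B. -/

import Mathlib

/-- `∂ⱼ` on functions on `ℝ^m`. -/
noncomputable def pd {m : ℕ} (j : Fin m) (u : (Fin m → ℝ) → ℂ) (Y : Fin m → ℝ) : ℂ :=
  fderiv ℝ u Y (Pi.single j 1)

/-- The Euler vector field `E u (Y) = Σⱼ Yⱼ ∂ⱼ u (Y)`. -/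
noncomputable def euler {m : ℕ} (u : (Fin m → ℝ) → ℂ) (Y : Fin m → ℝ) : ℂ :=
  ∑ j, (Y j : ℂ) * pd j u Y

/-- The Euclidean Laplacian `Δ u = Σⱼ ∂ⱼ² u`. -/
noncomputable def lap {m : ℕ} (u : (Fin m → ℝ) → ℂ) (Y : Fin m → ℝ) : ℂ :=
  ∑ j, pd j (pd j u) Y

/-- The normal operator family `P_σ u = −(E + (n−1−σ))((E − σ)u) + Δ_Y u − λ u`
acting on functions on `ℝ^{n−1}` (the real form of
`(YD_Y − i(n−1−σ))(YD_Y + iσ) − Δ_Y − λ`). -/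
noncomputable def Pop (n : ℕ) (lam σ : ℂ) (u : (Fin (n - 1) → ℝ) → ℂ)
    (Y : Fin (n - 1) → ℝ) : ℂ :=
  -(euler (fun Z => euler u Z - σ * u Z) Y
      + ((n : ℂ) - 1 - σ) * (euler u Y - σ * u Y))
    + lap u Y - lam * u Y

namespace Stmt11Aux

variable {m : ℕ}

def S (m : ℕ) : Set (Fin m → ℝ) := {Y | ∑ j, (Y j)^2 < 1}

lemma isOpen_S : IsOpen (S m) :=
  isOpen_lt (continuous_finset_sum _ fun j _ => (continuous_apply j).pow 2) continuous_const

/-- derivative of `∑ Z j ^ 2`. -/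
noncomputable def qD (Y : Fin m → ℝ) : (Fin m → ℝ) →L[ℝ] ℝ :=
  ∑ j, (2 * Y j) • ContinuousLinearMap.proj j

lemma hasFDerivAt_sumSq (Y : Fin m → ℝ) :
    HasFDerivAt (fun Z : Fin m → ℝ => ∑ j, Z j ^ 2) (qD Y) Y := by
  have h : ∀ j : Fin m, HasFDerivAt (fun Z : Fin m → ℝ => Z j ^ 2)
      ((2 * Y j) • (ContinuousLinearMap.proj j : (Fin m → ℝ) →L[ℝ] ℝ)) Y := by
    intro j
    have hp := (ContinuousLinearMap.proj j : (Fin m → ℝ) →L[ℝ] ℝ).hasFDerivAt (x := Y)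
    have := hp.mul hp
    simp only [ContinuousLinearMap.proj_apply] at this
    have h2 : (fun Z : Fin m → ℝ => Z j ^ 2) = fun Z => Z j * Z j := by
      funext Z; ring
    rw [h2]
    refine this.congr_fderiv ?_
    rw [two_mul, add_smul]
  simpa [qD] using HasFDerivAt.fun_sum (fun j (_ : j ∈ Finset.univ) => h j)

lemma qD_apply (Y : Fin m → ℝ) (j : Fin m) : qD Y (Pi.single j 1) = 2 * Y j := by
  simp [qD, ContinuousLinearMap.sum_apply, Pi.single_apply, mul_ite,
    Finset.sum_ite_eq']


/-- derivative of the conjugating power `(1-|Z|²)^t` at a point of the ball. -/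
lemma hasFDerivAt_F (t : ℂ) {Y : Fin m → ℝ} (hY : Y ∈ S m) :
    HasFDerivAt (fun Z : Fin m → ℝ => (((1 - ∑ j, (Z j)^2 : ℝ)) : ℂ) ^ t)
      ((ContinuousLinearMap.smulRight (1 : ℝ →L[ℝ] ℝ)
          (t * (((1 - ∑ j, (Y j)^2 : ℝ)) : ℂ) ^ (t - 1))).comp (-(qD Y))) Y := by
  have hx : (0:ℝ) < 1 - ∑ j, (Y j)^2 := by
    have : ∑ j, (Y j)^2 < 1 := hY
    linarith
  have hq : HasFDerivAt (fun Z : Fin m → ℝ => 1 - ∑ j, (Z j)^2) (-(qD Y)) Y :=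
    (hasFDerivAt_sumSq Y).const_sub 1
  have hg : HasDerivAt (fun x : ℝ => ((x:ℂ)) ^ t)
      (t * (((1 - ∑ j, (Y j)^2 : ℝ)) : ℂ) ^ (t - 1)) (1 - ∑ j, (Y j)^2) := by
    have hslit : (((1 - ∑ j, (Y j)^2 : ℝ)) : ℂ) ∈ Complex.slitPlane := by
      exact Complex.ofReal_mem_slitPlane.2 hx
    have h1 : HasDerivAt (fun z : ℂ => z ^ t)
        (t * (((1 - ∑ j, (Y j)^2 : ℝ)) : ℂ) ^ (t - 1)) (((1 - ∑ j, (Y j)^2 : ℝ)) : ℂ) := by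
      simpa using (hasDerivAt_id (((1 - ∑ j, (Y j)^2 : ℝ)) : ℂ)).cpow_const hslit
    exact h1.comp_ofReal
  exact (hasDerivAt_iff_hasFDerivAt.mp hg).comp Y hq

lemma pd_congr {Y : Fin m → ℝ} {f g : (Fin m → ℝ) → ℂ} (j : Fin m)
    (h : ∀ Z ∈ S m, f Z = g Z) (hY : Y ∈ S m) : pd j f Y = pd j g Y := by
  have : f =ᶠ[nhds Y] g :=
    Filter.eventuallyEq_of_mem (isOpen_S.mem_nhds hY) h
  unfold pd
  rw [this.fderiv_eq]

lemma pd_F (t : ℂ) {Y : Fin m → ℝ} (hY : Y ∈ S m) (j : Fin m) :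
    pd j (fun Z : Fin m → ℝ => (((1 - ∑ i, (Z i)^2 : ℝ)) : ℂ) ^ t) Y
      = (-2 * (Y j : ℂ)) * (t * (((1 - ∑ i, (Y i)^2 : ℝ)) : ℂ) ^ (t - 1)) := by
  unfold pd
  rw [(hasFDerivAt_F t hY).fderiv]
  simp [qD_apply, Complex.real_smul]
  try push_cast
  try ring

lemma diff_F (t : ℂ) {Y : Fin m → ℝ} (hY : Y ∈ S m) :
    DifferentiableAt ℝ (fun Z : Fin m → ℝ => (((1 - ∑ i, (Z i)^2 : ℝ)) : ℂ) ^ t) Y :=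
  (hasFDerivAt_F t hY).differentiableAt

lemma pd_mul {Y : Fin m → ℝ} {f g : (Fin m → ℝ) → ℂ} (j : Fin m)
    (hf : DifferentiableAt ℝ f Y) (hg : DifferentiableAt ℝ g Y) :
    pd j (fun Z => f Z * g Z) Y = pd j f Y * g Y + f Y * pd j g Y := by
  unfold pd
  rw [fderiv_fun_mul hf hg]
  simp only [ContinuousLinearMap.add_apply, ContinuousLinearMap.smul_apply, smul_eq_mul]
  ring

lemma pd_sub {Y : Fin m → ℝ} {f g : (Fin m → ℝ) → ℂ} (j : Fin m)
    (hf : DifferentiableAt ℝ f Y) (hg : DifferentiableAt ℝ g Y) :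
    pd j (fun Z => f Z - g Z) Y = pd j f Y - pd j g Y := by
  unfold pd
  rw [fderiv_fun_sub hf hg]
  simp

lemma pd_const_mul {Y : Fin m → ℝ} {f : (Fin m → ℝ) → ℂ} (j : Fin m) (a : ℂ)
    (hf : DifferentiableAt ℝ f Y) :
    pd j (fun Z => a * f Z) Y = a * pd j f Y := by
  unfold pd
  rw [fderiv_const_mul hf]
  simp

lemma hasFDerivAt_coord (i : Fin m) (Y : Fin m → ℝ) :
    HasFDerivAt (fun Z : Fin m → ℝ => ((Z i : ℝ) : ℂ))
      (Complex.ofRealCLM.comp (ContinuousLinearMap.proj i)) Y := by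
  exact (Complex.ofRealCLM.comp
    (ContinuousLinearMap.proj i : (Fin m → ℝ) →L[ℝ] ℝ)).hasFDerivAt

lemma pd_coord (i j : Fin m) (Y : Fin m → ℝ) :
    pd j (fun Z : Fin m → ℝ => ((Z i : ℝ) : ℂ)) Y = if i = j then 1 else 0 := by
  unfold pd
  rw [(hasFDerivAt_coord i Y).fderiv]
  simp only [ContinuousLinearMap.coe_comp', Function.comp_apply,
    ContinuousLinearMap.proj_apply, Pi.single_apply, eq_comm (a := j)]
  split <;> simp

lemma pd_ofReal_sumSq (j : Fin m) (Y : Fin m → ℝ) :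
    pd j (fun Z : Fin m → ℝ => ((∑ i, (Z i)^2 : ℝ) : ℂ)) Y = 2 * (Y j : ℂ) := by
  unfold pd
  have h : HasFDerivAt (fun Z : Fin m → ℝ => ((∑ i, (Z i)^2 : ℝ) : ℂ))
      (Complex.ofRealCLM.comp (qD Y)) Y :=
    Complex.ofRealCLM.hasFDerivAt.comp Y (hasFDerivAt_sumSq Y)
  rw [h.fderiv]
  simp [qD_apply]


lemma contDiffOn_pd {w : (Fin m → ℝ) → ℂ} (hw : ContDiffOn ℝ (⊤ : ℕ∞) w (S m)) (j : Fin m) :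
    ContDiffOn ℝ (⊤ : ℕ∞) (pd j w) (S m) := by
  have h1 : ContDiffOn ℝ (⊤ : ℕ∞) (fun Z => fderiv ℝ w Z) (S m) :=
    hw.fderiv_of_isOpen isOpen_S (by exact_mod_cast le_top)
  exact (ContinuousLinearMap.apply ℝ ℂ
    ((Pi.single j 1 : Fin m → ℝ))).contDiff.comp_contDiffOn h1

lemma contDiff_coord (j : Fin m) :
    ContDiff ℝ (⊤ : ℕ∞) (fun Y : Fin m → ℝ => ((Y j : ℝ) : ℂ)) := by
  exact (Complex.ofRealCLM.comp
    (ContinuousLinearMap.proj j : (Fin m → ℝ) →L[ℝ] ℝ)).contDiff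

lemma contDiffOn_euler {w : (Fin m → ℝ) → ℂ} (hw : ContDiffOn ℝ (⊤ : ℕ∞) w (S m)) :
    ContDiffOn ℝ (⊤ : ℕ∞) (euler w) (S m) := by
  show ContDiffOn ℝ (⊤ : ℕ∞) (fun Y => ∑ j, (Y j : ℂ) * pd j w Y) (S m)
  exact ContDiffOn.sum fun j _ =>
    ((contDiff_coord j).contDiffOn).mul (contDiffOn_pd hw j)

lemma diffAt_of_contDiffOn {w : (Fin m → ℝ) → ℂ} (hw : ContDiffOn ℝ (⊤ : ℕ∞) w (S m))
    {Z : Fin m → ℝ} (hZ : Z ∈ S m) : DifferentiableAt ℝ w Z :=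
  ((hw.contDiffAt (isOpen_S.mem_nhds hZ)).differentiableAt (by simp))


lemma pd_add {Y : Fin m → ℝ} {f g : (Fin m → ℝ) → ℂ} (j : Fin m)
    (hf : DifferentiableAt ℝ f Y) (hg : DifferentiableAt ℝ g Y) :
    pd j (fun Z => f Z + g Z) Y = pd j f Y + pd j g Y := by
  unfold pd
  rw [fderiv_fun_add hf hg]
  simp

lemma diff_R2 (Y : Fin m → ℝ) :
    DifferentiableAt ℝ (fun Z : Fin m → ℝ => ((∑ i, (Z i)^2 : ℝ) : ℂ)) Y :=
  (Complex.ofRealCLM.hasFDerivAt.comp Y (hasFDerivAt_sumSq Y)).differentiableAt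

lemma sum_master (a b d e : ℂ) (w g : Fin m → ℂ) (Y : Fin m → ℝ) :
    ∑ j, (a + b * ((Y j : ℂ))^2 + d * ((Y j : ℂ) * w j) + e * g j)
      = (m : ℂ) * a + b * ((∑ j, (Y j)^2 : ℝ) : ℂ)
        + d * (∑ j, ((Y j : ℂ) * w j)) + e * ∑ j, g j := by
  rw [Finset.sum_add_distrib, Finset.sum_add_distrib, Finset.sum_add_distrib,
    ← Finset.mul_sum, ← Finset.mul_sum, ← Finset.mul_sum]
  simp only [Finset.sum_const, Finset.card_univ, Fintype.card_fin, nsmul_eq_mul]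
  push_cast
  ring

lemma pd_conj (t : ℂ) {u : (Fin m → ℝ) → ℂ} (hu : ContDiffOn ℝ (⊤ : ℕ∞) u (S m))
    {Y : Fin m → ℝ} (hY : Y ∈ S m) (j : Fin m) :
    pd j (fun Z => (((1 - ∑ i, (Z i)^2 : ℝ)) : ℂ) ^ t * u Z) Y
      = (-2 * (Y j : ℂ)) * (t * (((1 - ∑ i, (Y i)^2 : ℝ)) : ℂ) ^ (t - 1)) * u Y
        + (((1 - ∑ i, (Y i)^2 : ℝ)) : ℂ) ^ t * pd j u Y := by
  rw [pd_mul j (diff_F t hY) (diffAt_of_contDiffOn hu hY), pd_F t hY j]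

lemma euler_conj (t : ℂ) {u : (Fin m → ℝ) → ℂ} (hu : ContDiffOn ℝ (⊤ : ℕ∞) u (S m))
    {Y : Fin m → ℝ} (hY : Y ∈ S m) :
    euler (fun Z => (((1 - ∑ i, (Z i)^2 : ℝ)) : ℂ) ^ t * u Z) Y
      = (-2 * t) * (((∑ i, (Y i)^2 : ℝ) : ℂ)
            * ((((1 - ∑ i, (Y i)^2 : ℝ)) : ℂ) ^ (t - 1) * u Y))
        + (((1 - ∑ i, (Y i)^2 : ℝ)) : ℂ) ^ t * euler u Y := by
  show (∑ j, (Y j : ℂ) * pd j (fun Z => (((1 - ∑ i, (Z i)^2 : ℝ)) : ℂ) ^ t * u Z) Y) = _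
  have step : ∀ j ∈ Finset.univ, (Y j : ℂ)
      * pd j (fun Z => (((1 - ∑ i, (Z i)^2 : ℝ)) : ℂ) ^ t * u Z) Y
      = (0 : ℂ) + ((-2 * t) * ((((1 - ∑ i, (Y i)^2 : ℝ)) : ℂ) ^ (t - 1) * u Y)) * ((Y j : ℂ))^2
        + 0 * ((Y j : ℂ) * pd j u Y)
        + ((((1 - ∑ i, (Y i)^2 : ℝ)) : ℂ) ^ t) * ((Y j : ℂ) * pd j u Y) := by
    intro j _
    rw [pd_conj t hu hY j]
    ring
  rw [Finset.sum_congr rfl step, sum_master]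
  show _ = _ + _ * (∑ j, (Y j : ℂ) * pd j u Y)
  ring


lemma euler_sub_const {u : (Fin m → ℝ) → ℂ} (hu : ContDiffOn ℝ (⊤ : ℕ∞) u (S m)) (a : ℂ)
    {Y : Fin m → ℝ} (hY : Y ∈ S m) :
    euler (fun Z => euler u Z - a * u Z) Y = euler (euler u) Y - a * euler u Y := by
  have du : DifferentiableAt ℝ u Y := diffAt_of_contDiffOn hu hY
  have deu : DifferentiableAt ℝ (euler u) Y := diffAt_of_contDiffOn (contDiffOn_euler hu) hY
  show (∑ j, (Y j : ℂ) * pd j (fun Z => euler u Z - a * u Z) Y) = _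
  have step : ∀ j ∈ Finset.univ, (Y j : ℂ) * pd j (fun Z => euler u Z - a * u Z) Y
      = (0 : ℂ) + 0 * ((Y j : ℂ))^2 + (-a) * ((Y j : ℂ) * pd j u Y)
        + 1 * ((Y j : ℂ) * pd j (euler u) Y) := by
    intro j _
    rw [pd_sub j deu (du.const_mul a), pd_const_mul j a du]
    ring
  rw [Finset.sum_congr rfl step, sum_master]
  show (m : ℂ) * 0 + 0 * _ + (-a) * euler u Y + 1 * euler (euler u) Y = _
  ring

lemma lap_conj (t : ℂ) {u : (Fin m → ℝ) → ℂ} (hu : ContDiffOn ℝ (⊤ : ℕ∞) u (S m))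
    {Y : Fin m → ℝ} (hY : Y ∈ S m) :
    lap (fun Z => (((1 - ∑ i, (Z i)^2 : ℝ)) : ℂ) ^ t * u Z) Y
      = (m : ℂ) * (-2 * t * (((1 - ∑ i, (Y i)^2 : ℝ)) : ℂ) ^ (t-1) * u Y)
        + (4 * t * (t-1) * (((1 - ∑ i, (Y i)^2 : ℝ)) : ℂ) ^ (t-2) * u Y)
            * ((∑ i, (Y i)^2 : ℝ) : ℂ)
        + (-4 * t * (((1 - ∑ i, (Y i)^2 : ℝ)) : ℂ) ^ (t-1)) * euler u Y
        + (((1 - ∑ i, (Y i)^2 : ℝ)) : ℂ) ^ t * lap u Y := by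
  have du : DifferentiableAt ℝ u Y := diffAt_of_contDiffOn hu hY
  show (∑ j, pd j (pd j (fun Z => (((1 - ∑ i, (Z i)^2 : ℝ)) : ℂ) ^ t * u Z)) Y) = _
  have step : ∀ j ∈ Finset.univ,
      pd j (pd j (fun Z => (((1 - ∑ i, (Z i)^2 : ℝ)) : ℂ) ^ t * u Z)) Y
      = (-2 * t * (((1 - ∑ i, (Y i)^2 : ℝ)) : ℂ) ^ (t-1) * u Y)
        + (4 * t * (t-1) * (((1 - ∑ i, (Y i)^2 : ℝ)) : ℂ) ^ (t-2) * u Y) * ((Y j : ℂ))^2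
        + (-4 * t * (((1 - ∑ i, (Y i)^2 : ℝ)) : ℂ) ^ (t-1)) * ((Y j : ℂ) * pd j u Y)
        + (((1 - ∑ i, (Y i)^2 : ℝ)) : ℂ) ^ t * pd j (pd j u) Y := by
    intro j _
    have dpuj : DifferentiableAt ℝ (pd j u) Y := diffAt_of_contDiffOn (contDiffOn_pd hu j) hY
    have d1 : DifferentiableAt ℝ (fun Z : Fin m → ℝ => ((Z j : ℝ) : ℂ)) Y :=
      (hasFDerivAt_coord j Y).differentiableAt
    have dA1 : DifferentiableAt ℝ (fun Z : Fin m → ℝ => -2 * ((Z j : ℝ) : ℂ)) Y :=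
      d1.const_mul (-2)
    have dmid : DifferentiableAt ℝ
        (fun Z : Fin m → ℝ => t * (((1 - ∑ i, (Z i)^2 : ℝ)) : ℂ) ^ (t-1)) Y :=
      (diff_F (t-1) hY).const_mul t
    have dA : DifferentiableAt ℝ
        (fun Z : Fin m → ℝ => -2 * ((Z j : ℝ) : ℂ)
          * (t * (((1 - ∑ i, (Z i)^2 : ℝ)) : ℂ) ^ (t-1))) Y := dA1.mul dmid
    have hcongr : pd j (pd j (fun Z => (((1 - ∑ i, (Z i)^2 : ℝ)) : ℂ) ^ t * u Z)) Y
        = pd j (fun Z => -2 * ((Z j : ℝ) : ℂ)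
            * (t * (((1 - ∑ i, (Z i)^2 : ℝ)) : ℂ) ^ (t-1)) * u Z
            + (((1 - ∑ i, (Z i)^2 : ℝ)) : ℂ) ^ t * pd j u Z) Y :=
      pd_congr j (fun Z hZ => pd_conj t hu hZ j) hY
    rw [hcongr, pd_add j (dA.fun_mul du) ((diff_F t hY).fun_mul dpuj),
      pd_mul j dA du, pd_mul j dA1 dmid, pd_mul j (diff_F t hY) dpuj,
      pd_F t hY j, pd_const_mul j (-2) d1, pd_coord j j,
      pd_const_mul j t (diff_F (t-1) hY), pd_F (t-1) hY j]
    simp only [eq_self_iff_true, if_true]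
    ring
  rw [Finset.sum_congr rfl step, sum_master]
  show _ + _ + _ + _ * lap u Y = _
  rfl


lemma eulerEuler_conj (t σ : ℂ) {u : (Fin m → ℝ) → ℂ} (hu : ContDiffOn ℝ (⊤ : ℕ∞) u (S m))
    {Y : Fin m → ℝ} (hY : Y ∈ S m) :
    euler (fun Z => euler (fun W => (((1 - ∑ i, (W i)^2 : ℝ)) : ℂ) ^ t * u W) Z
        - σ * ((((1 - ∑ i, (Z i)^2 : ℝ)) : ℂ) ^ t * u Z)) Y
      = (m : ℂ) * 0
        + (-4 * t * (((1 - ∑ i, (Y i)^2 : ℝ)) : ℂ) ^ (t-1) * u Y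
            + 4 * t * (t-1) * ((∑ i, (Y i)^2 : ℝ) : ℂ)
                * (((1 - ∑ i, (Y i)^2 : ℝ)) : ℂ) ^ (t-2) * u Y
            - 2 * t * (((1 - ∑ i, (Y i)^2 : ℝ)) : ℂ) ^ (t-1)
                * (euler u Y - σ * u Y)) * ((∑ i, (Y i)^2 : ℝ) : ℂ)
        + (-2 * t * ((∑ i, (Y i)^2 : ℝ) : ℂ) * (((1 - ∑ i, (Y i)^2 : ℝ)) : ℂ) ^ (t-1)
            - σ * (((1 - ∑ i, (Y i)^2 : ℝ)) : ℂ) ^ t) * euler u Y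
        + (((1 - ∑ i, (Y i)^2 : ℝ)) : ℂ) ^ t * euler (euler u) Y := by
  have du : DifferentiableAt ℝ u Y := diffAt_of_contDiffOn hu hY
  have deu : DifferentiableAt ℝ (euler u) Y := diffAt_of_contDiffOn (contDiffOn_euler hu) hY
  show (∑ j, (Y j : ℂ) * pd j (fun Z =>
      euler (fun W => (((1 - ∑ i, (W i)^2 : ℝ)) : ℂ) ^ t * u W) Z
        - σ * ((((1 - ∑ i, (Z i)^2 : ℝ)) : ℂ) ^ t * u Z)) Y) = _
  have step : ∀ j ∈ Finset.univ, (Y j : ℂ) * pd j (fun Z =>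
      euler (fun W => (((1 - ∑ i, (W i)^2 : ℝ)) : ℂ) ^ t * u W) Z
        - σ * ((((1 - ∑ i, (Z i)^2 : ℝ)) : ℂ) ^ t * u Z)) Y
      = (0 : ℂ)
        + (-4 * t * (((1 - ∑ i, (Y i)^2 : ℝ)) : ℂ) ^ (t-1) * u Y
            + 4 * t * (t-1) * ((∑ i, (Y i)^2 : ℝ) : ℂ)
                * (((1 - ∑ i, (Y i)^2 : ℝ)) : ℂ) ^ (t-2) * u Y
            - 2 * t * (((1 - ∑ i, (Y i)^2 : ℝ)) : ℂ) ^ (t-1)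
                * (euler u Y - σ * u Y)) * ((Y j : ℂ))^2
        + (-2 * t * ((∑ i, (Y i)^2 : ℝ) : ℂ) * (((1 - ∑ i, (Y i)^2 : ℝ)) : ℂ) ^ (t-1)
            - σ * (((1 - ∑ i, (Y i)^2 : ℝ)) : ℂ) ^ t) * ((Y j : ℂ) * pd j u Y)
        + (((1 - ∑ i, (Y i)^2 : ℝ)) : ℂ) ^ t * ((Y j : ℂ) * pd j (euler u) Y) := by
    intro j _
    have hH : ∀ Z ∈ S m,
        euler (fun W => (((1 - ∑ i, (W i)^2 : ℝ)) : ℂ) ^ t * u W) Z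
          - σ * ((((1 - ∑ i, (Z i)^2 : ℝ)) : ℂ) ^ t * u Z)
        = (-2 * t) * (((∑ i, (Z i)^2 : ℝ) : ℂ)
              * ((((1 - ∑ i, (Z i)^2 : ℝ)) : ℂ) ^ (t-1) * u Z))
          + (((1 - ∑ i, (Z i)^2 : ℝ)) : ℂ) ^ t * (euler u Z - σ * u Z) := by
      intro Z hZ
      rw [euler_conj t hu hZ]
      ring
    have hcongr : pd j (fun Z =>
        euler (fun W => (((1 - ∑ i, (W i)^2 : ℝ)) : ℂ) ^ t * u W) Z
          - σ * ((((1 - ∑ i, (Z i)^2 : ℝ)) : ℂ) ^ t * u Z)) Y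
        = pd j (fun Z => (-2 * t) * (((∑ i, (Z i)^2 : ℝ) : ℂ)
              * ((((1 - ∑ i, (Z i)^2 : ℝ)) : ℂ) ^ (t-1) * u Z))
            + (((1 - ∑ i, (Z i)^2 : ℝ)) : ℂ) ^ t * (euler u Z - σ * u Z)) Y :=
      pd_congr j hH hY
    have dT1 : DifferentiableAt ℝ (fun Z : Fin m → ℝ => ((∑ i, (Z i)^2 : ℝ) : ℂ)
        * ((((1 - ∑ i, (Z i)^2 : ℝ)) : ℂ) ^ (t-1) * u Z)) Y :=
      (diff_R2 Y).mul ((diff_F (t-1) hY).mul du)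
    have dEσ : DifferentiableAt ℝ (fun Z => euler u Z - σ * u Z) Y :=
      deu.sub (du.const_mul σ)
    rw [hcongr, pd_add j (dT1.const_mul (-2*t)) ((diff_F t hY).fun_mul dEσ),
      pd_const_mul j (-2*t) dT1,
      pd_mul j (diff_R2 Y) ((diff_F (t-1) hY).fun_mul du),
      pd_mul j (diff_F (t-1) hY) du,
      pd_mul j (diff_F t hY) dEσ,
      pd_sub j deu (du.const_mul σ),
      pd_const_mul j σ du,
      pd_F t hY j, pd_F (t-1) hY j, pd_ofReal_sumSq j Y]
    ring
  rw [Finset.sum_congr rfl step, sum_master]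
  rfl

end Stmt11Aux

/-- the conjugation identity
`P_σ((1−|Y|²)^s u) = (1−|Y|²)^s [4s(s−σ)(1−|Y|²)^{−1} u + P_{σ−2s} u]`
on the open unit ball `B ⊂ ℝ^{n−1}`, for every `u` smooth on `B`. -/


theorem stmt11 (n : ℕ) (hn : 2 ≤ n) (lam σ s : ℂ)
    (u : (Fin (n - 1) → ℝ) → ℂ)
    (hu : ContDiffOn ℝ (⊤ : ℕ∞) u {Y : Fin (n - 1) → ℝ | ∑ j, (Y j) ^ 2 < 1}) :
    ∀ Y ∈ {Y : Fin (n - 1) → ℝ | ∑ j, (Y j) ^ 2 < 1},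
      Pop n lam σ
          (fun Z => (((1 - ∑ j, (Z j) ^ 2 : ℝ)) : ℂ) ^ s * u Z) Y
        = (((1 - ∑ j, (Y j) ^ 2 : ℝ)) : ℂ) ^ s *
            (4 * s * (s - σ) * (((1 - ∑ j, (Y j) ^ 2 : ℝ)) : ℂ)⁻¹ * u Y
              + Pop n lam (σ - 2 * s) u Y) := by
  intro Y hY
  have hu' : ContDiffOn ℝ (⊤ : ℕ∞) u (Stmt11Aux.S (n-1)) := hu
  have hY' : Y ∈ Stmt11Aux.S (n-1) := hY
  have h1 : ∑ j, (Y j)^2 < 1 := hY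
  have hq : (0:ℝ) < 1 - ∑ j, (Y j)^2 := by linarith
  have hc : (((1 - ∑ j, (Y j)^2 : ℝ)) : ℂ) ≠ 0 :=
    Complex.ofReal_ne_zero.mpr (ne_of_gt hq)
  have hm : ((n - 1 : ℕ) : ℂ) = (n : ℂ) - 1 := by
    rw [Nat.cast_sub (by omega : 1 ≤ n), Nat.cast_one]
  have hR2 : ((∑ j, (Y j)^2 : ℝ) : ℂ) = 1 - (((1 - ∑ j, (Y j)^2 : ℝ)) : ℂ) := by
    push_cast
    ring
  simp only [Pop]
  rw [Stmt11Aux.eulerEuler_conj s σ hu' hY', Stmt11Aux.euler_conj s hu' hY',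
    Stmt11Aux.lap_conj s hu' hY', Stmt11Aux.euler_sub_const hu' (σ - 2*s) hY',
    hm, hR2]
  set c : ℂ := (((1 - ∑ j, (Y j)^2 : ℝ)) : ℂ) with hcdef
  set A := u Y
  set E := euler u Y
  set EE := euler (euler u) Y
  set L := lap u Y
  have hR1 : c * c ^ (s - 1) = c ^ s := by
    have h := Complex.cpow_add 1 (s - 1) hc
    rw [Complex.cpow_one] at h
    rw [← h]
    congr 1
    ring
  have hR5 : c * c ^ (s - 2) = c ^ (s - 1) := by
    have h := Complex.cpow_add 1 (s - 2) hc
    rw [Complex.cpow_one] at h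
    rw [← h]
    congr 1
    ring
  have hR2' : c * (c * c ^ (s - 2)) = c ^ s := by rw [hR5, hR1]
  have hR4 : c⁻¹ * c ^ s = c ^ (s - 1) := by
    rw [← hR1, ← mul_assoc, inv_mul_cancel₀ hc, one_mul]
  linear_combination
    (-4*E*s - 4*A*s + 4*A*s*σ - 2*A*((n:ℂ)-1)*s) * hR1
    + (4*A*s - 4*A*s^2) * hR2'
    + (4*A*s*σ - 4*A*s^2) * hR4
    + (-4*A*s + 4*A*s^2) * hR5
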